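/- If a patient p is rejected by doctor d during the run of the patient-proposing deferred-acceptance algorithm (with all agents truthful), then there is no stable matching in which p is matched to d. -/

import Mathlib

/-- State of the patient-proposing deferred-acceptance (Gale–Shapley) algorithm:
`tent d` is the patient tentatively held by doctor `d` (if any), and
`next p` is the index (in patient `p`'s preference list) of the next doctor
that `p` will propose to. -/
structure GSState (n : ℕ) where
  tent : Fin n → Option (Fin n)
  next : Fin n → ℕ

/-- The set of currently free (unmatched) patients. -/
def freeSet {n : ℕ} (s : GSState n) : Finset (Fin n) :=
  Finset.univ.filter (fun p => ∀ d, s.tent d ≠ some p)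

/-- One step of the algorithm: a free patient proposes to the most preferred
doctor not yet proposed to; the doctor holds the better of the proposer and
the currently held patient (lower `drank` value = more preferred). -/
def gsStep {n : ℕ} (plist : Fin n → ℕ → Fin n) (drank : Fin n → Fin n → ℕ)
    (s : GSState n) : GSState n :=
  if h : (freeSet s).Nonempty then
    let p := (freeSet s).min' h
    let d := plist p (s.next p)
    let next' := Function.update s.next p (s.next p + 1)
    match s.tent d with
    | none => ⟨Function.update s.tent d (some p), next'⟩
    | some q =>
        if drank d p < drank d q then ⟨Function.update s.tent d (some p), next'⟩
        else ⟨s.tent, next'⟩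
  else s

/-- Running the algorithm for a given number of steps from the empty state. -/
def gsRun {n : ℕ} (plist : Fin n → ℕ → Fin n) (drank : Fin n → Fin n → ℕ) :
    ℕ → GSState n
  | 0 => ⟨fun _ => none, fun _ => 0⟩
  | k + 1 => gsStep plist drank (gsRun plist drank k)

/-- The final state of the deferred-acceptance algorithm (it stabilizes after
at most `n * n` proposals). -/
def gsFinal (n : ℕ) (plist : Fin n → ℕ → Fin n) (drank : Fin n → Fin n → ℕ) :
    GSState n :=
  gsRun plist drank (n * n + 1)

/-- The proposal made at step `k` (if any): the free patient chosen at that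
step together with the doctor he proposes to. -/
def proposalAt {n : ℕ} (plist : Fin n → ℕ → Fin n) (drank : Fin n → Fin n → ℕ)
    (k : ℕ) : Option (Fin n × Fin n) :=
  let s := gsRun plist drank k
  if h : (freeSet s).Nonempty then
    some ((freeSet s).min' h, plist ((freeSet s).min' h) (s.next ((freeSet s).min' h)))
  else none

namespace GSAux

variable {n : ℕ} (plist : Fin n → ℕ → Fin n) (drank : Fin n → Fin n → ℕ)

lemma mem_freeSet {s : GSState n} {p : Fin n} :
    p ∈ freeSet s ↔ ∀ d, s.tent d ≠ some p := by simp [freeSet]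

lemma gsStep_empty (s : GSState n) (h : ¬ (freeSet s).Nonempty) :
    gsStep plist drank s = s := by
  unfold gsStep; rw [dif_neg h]

lemma gsRun_succ (t : ℕ) :
    gsRun plist drank (t+1) = gsStep plist drank (gsRun plist drank t) := rfl

lemma gsStep_spec (s : GSState n) (h : (freeSet s).Nonempty) (p d : Fin n)
    (hp : p = (freeSet s).min' h) (hd : d = plist p (s.next p)) :
    (gsStep plist drank s).next = Function.update s.next p (s.next p + 1) ∧
    (((gsStep plist drank s).tent = Function.update s.tent d (some p) ∧
        (s.tent d = none ∨ ∃ q, s.tent d = some q ∧ drank d p < drank d q)) ∨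
      ((gsStep plist drank s).tent = s.tent ∧
        ∃ q, s.tent d = some q ∧ ¬ drank d p < drank d q)) := by
  subst hp hd
  unfold gsStep
  rw [dif_pos h]
  rcases htd : s.tent (plist ((freeSet s).min' h) (s.next ((freeSet s).min' h))) with _ | q
  · simp [htd]
  · simp only [htd]
    by_cases hlt : drank (plist ((freeSet s).min' h) (s.next ((freeSet s).min' h))) ((freeSet s).min' h)
        < drank (plist ((freeSet s).min' h) (s.next ((freeSet s).min' h))) q
    · rw [if_pos hlt]; exact ⟨rfl, Or.inl ⟨rfl, Or.inr ⟨q, rfl, hlt⟩⟩⟩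
    · rw [if_neg hlt]; exact ⟨rfl, Or.inr ⟨rfl, q, rfl, hlt⟩⟩

/-- q has proposed to e by time t -/
def Propd (t : ℕ) (q e : Fin n) : Prop :=
  ∃ j, j < (gsRun plist drank t).next q ∧ plist q j = e

lemma free_next_lt (s : GSState n)
    (hplist : ∀ p, Function.Bijective (fun k : Fin n => plist p (k : ℕ)))
    (hI2 : ∀ e e' r, s.tent e = some r → s.tent e' = some r → e = e')
    (hI3 : ∀ q e, (∃ j, j < s.next q ∧ plist q j = e) → s.tent e ≠ none)
    (p : Fin n) (hfree : p ∈ freeSet s) : s.next p < n := by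
  by_contra hge
  push_neg at hge
  have hall : ∀ e : Fin n, s.tent e ≠ none := by
    intro e
    obtain ⟨k, hk⟩ := (hplist p).2 e
    exact hI3 p e ⟨(k : ℕ), lt_of_lt_of_le k.isLt hge, hk⟩
  have hsome : ∀ e : Fin n, (s.tent e).isSome := fun e => Option.isSome_iff_ne_none.2 (hall e)
  set f : Fin n → Fin n := fun e => (s.tent e).get (hsome e) with hf
  have hfe : ∀ e, s.tent e = some (f e) := fun e => (Option.some_get (hsome e)).symm
  have hinj : Function.Injective f := by
    intro e e' hee
    exact hI2 e e' (f e) (hfe e) (by rw [hee]; exact hfe e')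
  have hsurj : Function.Surjective f := Finite.surjective_of_injective hinj
  obtain ⟨e, he⟩ := hsurj p
  exact (mem_freeSet.1 hfree) e (by rw [hfe e, he])

lemma inv (hplist : ∀ p, Function.Bijective (fun k : Fin n => plist p (k : ℕ))) (t : ℕ) :
    (∀ e r, (gsRun plist drank t).tent e = some r → Propd plist drank t r e) ∧
    (∀ e e' r, (gsRun plist drank t).tent e = some r →
        (gsRun plist drank t).tent e' = some r → e = e') ∧
    (∀ q e, Propd plist drank t q e → (gsRun plist drank t).tent e ≠ none) ∧
    (∀ q, (gsRun plist drank t).next q ≤ n) := by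
  induction t with
  | zero =>
      refine ⟨?_, ?_, ?_, ?_⟩
      · intro e r h; simp [gsRun] at h
      · intro e e' r h; simp [gsRun] at h
      · rintro q e ⟨j, hj, _⟩; simp [gsRun] at hj
      · intro q; simp [gsRun]
  | succ t ih =>
      obtain ⟨ih1, ih2, ih3, ih4⟩ := ih
      simp only [Propd, gsRun_succ]
      by_cases h : (freeSet (gsRun plist drank t)).Nonempty
      · set s := gsRun plist drank t with hs
        set p := (freeSet s).min' h with hp
        set d := plist p (s.next p) with hd
        have hpfree : p ∈ freeSet s := Finset.min'_mem _ h
        have hpfree' : ∀ e, s.tent e ≠ some p := mem_freeSet.1 hpfree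
        have hplt : s.next p < n := free_next_lt plist s hplist ih2 ih3 p hpfree
        obtain ⟨hnext, hcase⟩ := gsStep_spec plist drank s h p d hp hd
        have hmono : ∀ q, s.next q ≤ (gsStep plist drank s).next q := by
          intro q
          rw [hnext, Function.update_apply]
          split
          · next hq => subst hq; omega
          · exact le_refl _
        have htent_ne : ∀ e, s.tent e ≠ none → (gsStep plist drank s).tent e ≠ none := by
          intro e he
          rcases hcase with ⟨ht, _⟩ | ⟨ht, _⟩
          · rw [ht, Function.update_apply]; split <;> simp_all
          · rw [ht]; exact he
        refine ⟨?_, ?_, ?_, ?_⟩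
        · -- I1
          intro e r hr
          rcases hcase with ⟨ht, _⟩ | ⟨ht, _⟩
          · rw [ht, Function.update_apply] at hr
            by_cases hed : e = d
            · rw [if_pos hed] at hr
              have hpr : p = r := by injection hr
              refine ⟨s.next p, ?_, by rw [← hpr, hed]⟩
              rw [← hpr, hnext, Function.update_self]; omega
            · rw [if_neg hed] at hr
              obtain ⟨j, hj, hje⟩ := ih1 e r hr
              exact ⟨j, lt_of_lt_of_le hj (hmono r), hje⟩
          · rw [ht] at hr
            obtain ⟨j, hj, hje⟩ := ih1 e r hr
            exact ⟨j, lt_of_lt_of_le hj (hmono r), hje⟩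
        · -- I2
          intro e e' r hr hr'
          rcases hcase with ⟨ht, _⟩ | ⟨ht, _⟩
          · rw [ht, Function.update_apply] at hr hr'
            by_cases hed : e = d <;> by_cases hed' : e' = d
            · rw [hed, hed']
            · rw [if_pos hed] at hr; rw [if_neg hed'] at hr'
              have hpr : p = r := by injection hr
              exact absurd hr' (hpr ▸ hpfree' e')
            · rw [if_neg hed] at hr; rw [if_pos hed'] at hr'
              have hpr : p = r := by injection hr'
              exact absurd hr (hpr ▸ hpfree' e)
            · rw [if_neg hed] at hr; rw [if_neg hed'] at hr'
              exact ih2 e e' r hr hr'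
          · rw [ht] at hr hr'; exact ih2 e e' r hr hr'
        · -- I3
          rintro q e ⟨j, hj, hje⟩
          rw [hnext, Function.update_apply] at hj
          by_cases hq : q = p
          · rw [if_pos (by rw [hq])] at hj
            subst hq
            rcases Nat.lt_succ_iff_lt_or_eq.1 hj with hj' | hj'
            · exact htent_ne e (ih3 p e ⟨j, hj', hje⟩)
            · subst hj'
              have hed : e = d := by rw [← hje, hd]
              subst hed
              rcases hcase with ⟨ht, _⟩ | ⟨ht, q0, htd, _⟩
              · rw [ht, Function.update_self]; simp
              · rw [ht, htd]; simp
          · rw [if_neg hq] at hj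
            exact htent_ne e (ih3 q e ⟨j, hj, hje⟩)
        · -- I4
          intro q
          rw [hnext, Function.update_apply]
          split
          · next hq => subst hq; omega
          · exact ih4 q
      · rw [gsStep_empty plist drank _ h]
        exact ⟨ih1, ih2, ih3, ih4⟩

lemma key (prank : Fin n → Fin n → ℕ)
    (hplist : ∀ p, Function.Bijective (fun k : Fin n => plist p (k : ℕ)))
    (hprank : ∀ p (k : Fin n), prank p (plist p (k : ℕ)) = (k : ℕ))
    (hpinj : ∀ p, Function.Injective (prank p))
    (hdinj : ∀ d, Function.Injective (drank d))
    (M' : Equiv.Perm (Fin n))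
    (hstab : ∀ q e, ¬ (M' q ≠ e ∧ prank q e < prank q (M' q) ∧
        drank e q < drank e (M'.symm e))) :
    ∀ t q e, Propd plist drank t q e → (gsRun plist drank t).tent e ≠ some q →
      M' q ≠ e := by
  intro t
  induction t with
  | zero => rintro q e ⟨j, hj, _⟩ _; simp [gsRun] at hj
  | succ t ih =>
    rintro q e ⟨j, hj, hje⟩ htent hMq
    obtain ⟨ih1, ih2, ih3, ih4⟩ := inv plist drank hplist t
    by_cases h : (freeSet (gsRun plist drank t)).Nonempty
    · set s := gsRun plist drank t with hs
      set p := (freeSet s).min' h with hp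
      set d := plist p (s.next p) with hd
      have hpfree' : ∀ e, s.tent e ≠ some p := mem_freeSet.1 (Finset.min'_mem _ h)
      have hplt : s.next p < n := free_next_lt plist s hplist ih2 ih3 p (Finset.min'_mem _ h)
      obtain ⟨hnext, hcase⟩ := gsStep_spec plist drank s h p d hp hd
      rw [gsRun_succ] at htent
      have hj' : j < Function.update s.next p (s.next p + 1) q := by
        rw [← hnext]; exact hj
      clear hj
      have hfinish : ∀ r : Fin n, r ≠ q → drank e r < drank e q →
          prank r e ≤ s.next r → (∀ e'', e'' ≠ e → s.tent e'' ≠ some r) → False := by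
        intro r hrq hdr hre hother
        have he' : M' r ≠ e := fun hc => hrq (M'.injective (by rw [hc, hMq]))
        have hne : prank r (M' r) ≠ prank r e := fun hc => he' (hpinj r hc)
        rcases lt_or_gt_of_ne hne with hlt | hgt
        · obtain ⟨k, hk⟩ := (hplist r).2 (M' r)
          have hkval : prank r (M' r) = (k : ℕ) := by rw [← hk, hprank]
          have hkbound : (k : ℕ) < s.next r := by
            have h1 : (k : ℕ) < prank r e := hkval ▸ hlt
            exact lt_of_lt_of_le h1 hre
          exact ih r (M' r) ⟨(k : ℕ), hkbound, hk⟩ (hother (M' r) he') rfl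
        · have hsymm : M'.symm e = q := by rw [← hMq, Equiv.symm_apply_apply]
          exact hstab r e ⟨he', hgt, by rw [hsymm]; exact hdr⟩
      by_cases hX : s.tent e = some q
      · -- q was held by e and must have been bumped at this step
        rcases hcase with ⟨ht, hacc⟩ | ⟨ht, q0, htd, _⟩
        · by_cases hed : e = d
          · subst hed
            rcases hacc with hnone | ⟨q', hq', hdlt⟩
            · rw [hX] at hnone; exact absurd hnone (Option.some_ne_none q)
            · rw [hX] at hq'
              injection hq' with hqq
              subst hqq
              have hpq : p ≠ q := fun hc => hpfree' d (hc ▸ hX)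
              have hpre : prank p d = s.next p := by
                have := hprank p ⟨s.next p, hplt⟩
                simpa [← hd] using this
              exact hfinish p hpq hdlt (le_of_eq hpre) (fun e'' _ => hpfree' e'')
          · rw [ht, Function.update_of_ne hed] at htent; exact htent hX
        · rw [ht] at htent; exact htent hX
      · by_cases hY : Propd plist drank t q e
        · exact ih q e hY hX hMq
        · -- q proposed to e at this very step and was rejected
          have hqp : q = p := by
            by_contra hqp
            rw [Function.update_of_ne hqp] at hj'
            exact hY ⟨j, hj', hje⟩
          rw [hqp, Function.update_self] at hj'
          have hjeq : j = s.next p := by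
            rcases Nat.lt_succ_iff_lt_or_eq.1 hj' with h' | h'
            · exact absurd ⟨j, hqp ▸ h', hje⟩ hY
            · exact h'
          have hed : e = d := by rw [hd, ← hjeq, ← hqp, hje]
          rcases hcase with ⟨ht, _⟩ | ⟨ht, q0, htd, hnlt⟩
          · rw [ht, ← hed] at htent
            rw [hqp] at htent
            rw [hed, Function.update_self] at htent
            exact htent rfl
          · have hq0p : q0 ≠ p := fun hc => hpfree' d (hc ▸ htd)
            have hq0q : q0 ≠ q := by rw [hqp]; exact hq0p
            have hdlt : drank e q0 < drank e q := by
              rw [hed, hqp]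
              rcases lt_or_eq_of_le (not_lt.1 hnlt) with h' | h'
              · exact h'
              · exact absurd (hdinj d h') hq0p
            obtain ⟨j0, hj0, hj0e⟩ := ih1 d q0 htd
            have hj0n : j0 < n := lt_of_lt_of_le hj0 (ih4 q0)
            have hpre : prank q0 e = j0 := by
              have := hprank q0 ⟨j0, hj0n⟩
              rw [hed]
              simpa [hj0e] using this
            have hother : ∀ e'', e'' ≠ e → s.tent e'' ≠ some q0 := by
              intro e'' hne htc
              exact hne (hed ▸ ih2 e'' d q0 htc htd)
            exact hfinish q0 hq0q hdlt (hpre ▸ le_of_lt hj0) hother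
    · have hr : gsRun plist drank (t+1) = gsRun plist drank t := by
        rw [gsRun_succ, gsStep_empty plist drank _ h]
      rw [hr] at hj htent
      exact ih q e ⟨j, hj, hje⟩ htent hMq


lemma proposalAt_spec (k : ℕ) (p d : Fin n)
    (h : proposalAt plist drank k = some (p, d)) :
    ∃ hne : (freeSet (gsRun plist drank k)).Nonempty,
      p = (freeSet (gsRun plist drank k)).min' hne ∧
      d = plist p ((gsRun plist drank k).next p) := by
  by_cases hne : (freeSet (gsRun plist drank k)).Nonempty
  · refine ⟨hne, ?_⟩
    simp only [proposalAt, dif_pos hne, Option.some.injEq, Prod.mk.injEq] at h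
    obtain ⟨h1, h2⟩ := h
    exact ⟨h1.symm, by rw [← h2, h1]⟩
  · simp [proposalAt, dif_neg hne] at h

end GSAux

/-- if patient `p` is rejected by doctor `d` at some step of the
patient-proposing deferred-acceptance algorithm (he proposes to `d` at step `k`
but `d` does not hold him after the step), then no stable matching pairs `p`
with `d`. -/
theorem gs_rejected_unachievable (n : ℕ)
    (plist : Fin n → ℕ → Fin n) (prank drank : Fin n → Fin n → ℕ)
    (hplist : ∀ p, Function.Bijective (fun k : Fin n => plist p (k : ℕ)))
    (hprank : ∀ p (k : Fin n), prank p (plist p (k : ℕ)) = (k : ℕ))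
    (hpinj : ∀ p, Function.Injective (prank p))
    (hdinj : ∀ d, Function.Injective (drank d)) :
    ∀ (k : ℕ) (p d : Fin n),
      proposalAt plist drank k = some (p, d) →
      (gsRun plist drank (k + 1)).tent d ≠ some p →
      ∀ M' : Equiv.Perm (Fin n),
        (∀ q e, ¬ (M' q ≠ e ∧ prank q e < prank q (M' q) ∧
            drank e q < drank e (M'.symm e))) →
        M' p ≠ d := by
  intro k p d hprop htent M' hstab hMpd
  obtain ⟨hne, hp, hd⟩ := GSAux.proposalAt_spec plist drank k p d hprop
  obtain ⟨hnext, -⟩ := GSAux.gsStep_spec plist drank (gsRun plist drank k) hne p d hp hd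
  have hProp : GSAux.Propd plist drank (k + 1) p d := by
    refine ⟨(gsRun plist drank k).next p, ?_, hd.symm⟩
    show _ < (gsStep plist drank (gsRun plist drank k)).next p
    rw [hnext, Function.update_self]
    omega
  exact GSAux.key plist drank prank hplist hprank hpinj hdinj M' hstab (k + 1) p d hProp
    htent hMpd
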